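/- Define Q(n,p) := 3^n * (2p)! * (2n+p-1)! / (p! * (p-1)! * n! * (n+p+1)!). Then for all n ≥ 0 and p ≥ 1, Q(n,p) is a positive integer. -/
import Mathlib

open Finset Nat

/-- Characterize a natural division `x / m` when `x < 3 * m`. -/
lemma div3_cases (x m : ℕ) (hm : 0 < m) (hx : x < 3 * m) :
    (x / m = 0 ∧ x < m) ∨ (x / m = 1 ∧ m ≤ x ∧ x < 2 * m) ∨ (x / m = 2 ∧ 2 * m ≤ x) := by
  rcases Nat.lt_or_ge x m with h | h
  · exact Or.inl ⟨Nat.div_eq_of_lt h, h⟩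
  rcases Nat.lt_or_ge x (2 * m) with h2 | h2
  · exact Or.inr (Or.inl ⟨Nat.div_eq_of_lt_le (by omega) (by omega), h, h2⟩)
  · exact Or.inr (Or.inr ⟨Nat.div_eq_of_lt_le (by omega) (by omega), h2⟩)

/-- The key floor inequality, for every modulus `m ≥ 2` other than `3`. -/
lemma keyA (m n p : ℕ) (hm : 2 ≤ m) (hm3 : m ≠ 3) (hp : 1 ≤ p) :
    p / m + (p - 1) / m + n / m + (n + p + 1) / m ≤ 2 * p / m + (2 * n + p - 1) / m := by
  have hm0 : 0 < m := by omega
  obtain ⟨a, r, hr, rfl⟩ : ∃ a r, r < m ∧ p = m * a + r :=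
    ⟨p / m, p % m, Nat.mod_lt _ hm0, by rw [Nat.div_add_mod]⟩
  obtain ⟨c, t, ht, rfl⟩ : ∃ c t, t < m ∧ n = m * c + t :=
    ⟨n / m, n % m, Nat.mod_lt _ hm0, by rw [Nat.div_add_mod]⟩
  have e1 : (m * a + r) / m = a + r / m := Nat.mul_add_div hm0 a r
  have e1' : r / m = 0 := Nat.div_eq_of_lt hr
  have e3 : (m * c + t) / m = c := by rw [Nat.mul_add_div hm0, Nat.div_eq_of_lt ht]; omega
  have e4 : (m * c + t + (m * a + r) + 1) / m = a + c + (t + r + 1) / m := by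
    rw [show m * c + t + (m * a + r) + 1 = m * (a + c) + (t + r + 1) by ring,
      Nat.mul_add_div hm0]
  have e5 : 2 * (m * a + r) / m = 2 * a + 2 * r / m := by
    rw [show 2 * (m * a + r) = m * (2 * a) + 2 * r by ring, Nat.mul_add_div hm0]
  rcases Nat.eq_zero_or_pos r with hr0 | hr1
  · -- r = 0, so a ≥ 1
    subst hr0
    have ha : 1 ≤ a := by by_contra h; interval_cases a <;> omega
    obtain ⟨a', rfl⟩ : ∃ a', a = a' + 1 := ⟨a - 1, by omega⟩
    have hmul : m * (a' + 1) = m * a' + m := by ring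
    have e2 : (m * (a' + 1) + 0 - 1) / m = a' := by
      rw [show m * (a' + 1) + 0 - 1 = m * a' + (m - 1) by omega,
        Nat.mul_add_div hm0, Nat.div_eq_of_lt (by omega)]
      omega
    rcases Nat.eq_zero_or_pos t with ht0 | ht1
    · -- r = 0, t = 0
      subst ht0
      have e6 : (2 * (m * c + 0) + (m * (a' + 1) + 0) - 1) / m = 2 * c + a' := by
        rw [show 2 * (m * c + 0) + (m * (a' + 1) + 0) - 1 = m * (2 * c + a') + (m - 1) by
          have h2 : m * (2 * c + a') = 2 * (m * c) + m * a' := by ring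
          omega]
        rw [Nat.mul_add_div hm0, Nat.div_eq_of_lt (by omega)]
        omega
      have hv : (0 + 0 + 1) / m = 0 := Nat.div_eq_of_lt (by omega)
      have hu : 2 * 0 / m = 0 := by simp
      rw [e1, e1', e2, e3, e4, e5, e6, hv, hu]
      omega
    · -- r = 0, t ≥ 1
      have e6 : (2 * (m * c + t) + (m * (a' + 1) + 0) - 1) / m
          = 2 * c + (a' + 1) + (2 * t - 1) / m := by
        rw [show 2 * (m * c + t) + (m * (a' + 1) + 0) - 1
            = m * (2 * c + (a' + 1)) + (2 * t - 1) by
          have h2 : m * (2 * c + (a' + 1)) = 2 * (m * c) + m * (a' + 1) := by ring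
          omega]
        rw [Nat.mul_add_div hm0]
      rw [e1, e1', e2, e3, e4, e5, e6]
      have hv := div3_cases (t + 0 + 1) m hm0 (by omega)
      have hw := div3_cases (2 * t - 1) m hm0 (by omega)
      have hu : 2 * 0 / m = 0 := by simp
      rw [hu]
      omega
  · -- r ≥ 1
    have e2 : (m * a + r - 1) / m = a := by
      rw [show m * a + r - 1 = m * a + (r - 1) by omega, Nat.mul_add_div hm0,
        Nat.div_eq_of_lt (by omega)]
      omega
    have e6 : (2 * (m * c + t) + (m * a + r) - 1) / m = 2 * c + a + (2 * t + r - 1) / m := by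
      rw [show 2 * (m * c + t) + (m * a + r) - 1 = m * (2 * c + a) + (2 * t + r - 1) by
        have h2 : m * (2 * c + a) = 2 * (m * c) + m * a := by ring
        omega]
      rw [Nat.mul_add_div hm0]
    rw [e1, e1', e2, e3, e4, e5, e6]
    have hu := div3_cases (2 * r) m hm0 (by omega)
    have hv := div3_cases (t + r + 1) m hm0 (by omega)
    have hw := div3_cases (2 * t + r - 1) m hm0 (by omega)
    omega

/-- The key floor inequality at `m = 3`, with the extra `n` coming from `3 ^ n`. -/
lemma keyB (n p : ℕ) (hp : 1 ≤ p) :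
    p / 3 + (p - 1) / 3 + n / 3 + (n + p + 1) / 3 ≤ n + (2 * p / 3 + (2 * n + p - 1) / 3) := by
  obtain ⟨a, r, hr, rfl⟩ : ∃ a r, r < 3 ∧ p = 3 * a + r :=
    ⟨p / 3, p % 3, by omega, by omega⟩
  obtain ⟨c, t, ht, rfl⟩ : ∃ c t, t < 3 ∧ n = 3 * c + t :=
    ⟨n / 3, n % 3, by omega, by omega⟩
  interval_cases r <;> interval_cases t <;> omega

lemma sum_ineq (n p b q : ℕ) (hq : q.Prime) (hb : 2 ≤ b) (hp : 1 ≤ p) :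
    ∑ i ∈ Finset.Ico 1 b, (p / q ^ i + (p - 1) / q ^ i + n / q ^ i + (n + p + 1) / q ^ i)
      ≤ (if 3 = q then n else 0)
        + ∑ i ∈ Finset.Ico 1 b, (2 * p / q ^ i + (2 * n + p - 1) / q ^ i) := by
  have hq2 := hq.two_le
  have hpow : ∀ i, 1 ≤ i → 2 ≤ q ^ i := fun i hi => by
    calc 2 ≤ q := hq2
    _ ≤ q ^ i := Nat.le_self_pow (by omega) q
  by_cases h3 : q = 3
  · subst h3
    rw [if_pos rfl]
    rw [Finset.sum_eq_sum_Ico_succ_bot (show 1 < b by omega),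
      Finset.sum_eq_sum_Ico_succ_bot (show 1 < b by omega)]
    have h1 : p / 3 ^ 1 + (p - 1) / 3 ^ 1 + n / 3 ^ 1 + (n + p + 1) / 3 ^ 1
        ≤ n + (2 * p / 3 ^ 1 + (2 * n + p - 1) / 3 ^ 1) := by
      simpa using keyB n p hp
    have h2 : ∑ i ∈ Finset.Ico (1 + 1) b,
          (p / 3 ^ i + (p - 1) / 3 ^ i + n / 3 ^ i + (n + p + 1) / 3 ^ i)
        ≤ ∑ i ∈ Finset.Ico (1 + 1) b, (2 * p / 3 ^ i + (2 * n + p - 1) / 3 ^ i) := by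
      refine Finset.sum_le_sum fun i hi => ?_
      have hi2 : 2 ≤ i := by
        have := (Finset.mem_Ico.mp hi).1
        omega
      have h9 : (9 : ℕ) ≤ 3 ^ i := by
        calc (9 : ℕ) = 3 ^ 2 := by norm_num
        _ ≤ 3 ^ i := Nat.pow_le_pow_right (by norm_num) hi2
      exact keyA (3 ^ i) n p (by omega) (by omega) hp
    omega
  · rw [if_neg (fun h => h3 h.symm), zero_add]
    refine Finset.sum_le_sum fun i hi => ?_
    have hi1 : 1 ≤ i := (Finset.mem_Ico.mp hi).1
    refine keyA (q ^ i) n p (hpow i hi1) (fun h => ?_) hp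
    have hdvd : q ∣ 3 := h ▸ dvd_pow_self q (by omega : i ≠ 0)
    exact h3 ((Nat.prime_dvd_prime_iff_eq hq Nat.prime_three).mp hdvd)

lemma main_dvd (n p : ℕ) (hp : 1 ≤ p) :
    (p.factorial * (p - 1).factorial * n.factorial * (n + p + 1).factorial)
      ∣ 3 ^ n * (2 * p).factorial * (2 * n + p - 1).factorial := by
  have hD : p.factorial * (p - 1).factorial * n.factorial * (n + p + 1).factorial ≠ 0 := by
    positivity
  have hN : 3 ^ n * (2 * p).factorial * (2 * n + p - 1).factorial ≠ 0 := by positivity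
  rw [← Nat.factorization_le_iff_dvd hD hN, Finsupp.le_def]
  intro q
  by_cases hq : q.Prime
  swap
  · simp [Nat.factorization_eq_zero_of_not_prime _ hq]
  haveI : Fact q.Prime := ⟨hq⟩
  have hfac : ∀ x : ℕ, x ≤ 2 * n + 2 * p + 1 →
      (x.factorial).factorization q
        = ∑ i ∈ Finset.Ico 1 (2 * n + 2 * p + 2), x / q ^ i := by
    intro x hx
    rw [Nat.factorization_def _ hq,
      padicValNat_factorial (p := q) (b := 2 * n + 2 * p + 2)
        (lt_of_le_of_lt (Nat.log_le_self q x) (by omega))]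
  have hDq : (p.factorial * (p - 1).factorial * n.factorial
      * (n + p + 1).factorial).factorization q
      = ∑ i ∈ Finset.Ico 1 (2 * n + 2 * p + 2),
          (p / q ^ i + (p - 1) / q ^ i + n / q ^ i + (n + p + 1) / q ^ i) := by
    rw [Nat.factorization_mul (by positivity) (Nat.factorial_ne_zero _),
      Nat.factorization_mul (by positivity) (Nat.factorial_ne_zero _),
      Nat.factorization_mul (Nat.factorial_ne_zero _) (Nat.factorial_ne_zero _)]
    simp only [Finsupp.add_apply, Finsupp.coe_add, Pi.add_apply]
    rw [hfac p (by omega), hfac (p - 1) (by omega), hfac n (by omega),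
      hfac (n + p + 1) (by omega), ← Finset.sum_add_distrib, ← Finset.sum_add_distrib,
      ← Finset.sum_add_distrib]
  have hNq : (3 ^ n * (2 * p).factorial * (2 * n + p - 1).factorial).factorization q
      = (if 3 = q then n else 0)
        + ∑ i ∈ Finset.Ico 1 (2 * n + 2 * p + 2),
            (2 * p / q ^ i + (2 * n + p - 1) / q ^ i) := by
    rw [Nat.factorization_mul (by positivity) (Nat.factorial_ne_zero _),
      Nat.factorization_mul (by positivity) (Nat.factorial_ne_zero _)]
    simp only [Finsupp.add_apply, Finsupp.coe_add, Pi.add_apply]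
    rw [hfac (2 * p) (by omega), hfac (2 * n + p - 1) (by omega),
      Nat.Prime.factorization_pow Nat.prime_three, Finsupp.single_apply,
      add_assoc, ← Finset.sum_add_distrib]
  rw [hDq, hNq]
  exact sum_ineq n p (2 * n + 2 * p + 2) q hq (by omega) hp

/-- `Q n p = 3^n (2p)! (2n+p-1)! / (p! (p-1)! n! (n+p+1)!)`, the number of rooted
quadrangulations with a boundary having `n` internal faces and boundary length `2p`. -/
noncomputable def Q (n p : ℕ) : ℚ :=
  3 ^ n * (Nat.factorial (2 * p) : ℚ) * (Nat.factorial (2 * n + p - 1) : ℚ) /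
    ((Nat.factorial p : ℚ) * (Nat.factorial (p - 1) : ℚ) * (Nat.factorial n : ℚ) *
      (Nat.factorial (n + p + 1) : ℚ))

/--  is a positive integer. -/
theorem Q_pos_integer (n p : ℕ) (hp : 1 ≤ p) :
    ∃ k : ℕ, 0 < k ∧ Q n p = (k : ℚ) := by
  have hdvd := main_dvd n p hp
  set N : ℕ := 3 ^ n * (2 * p).factorial * (2 * n + p - 1).factorial with hNdef
  set D : ℕ := p.factorial * (p - 1).factorial * n.factorial * (n + p + 1).factorial with hDdef
  have hDpos : 0 < D := by positivity
  have hNpos : 0 < N := by positivity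
  refine ⟨N / D, Nat.div_pos (Nat.le_of_dvd hNpos hdvd) hDpos, ?_⟩
  have hcast : ((N / D : ℕ) : ℚ) = (N : ℚ) / (D : ℚ) :=
    Nat.cast_div hdvd (by exact_mod_cast hDpos.ne')
  rw [hcast, hNdef, hDdef]
  simp only [Q]
  push_cast
  ring
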